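/- Let p be prime, q = p^r, 0 ≤ t < q, and let m ≥ q be an integer with m ≢ t (mod q). Then C(m,t) · C(m-1-t, q-1-t) ≡ 0 (mod p). -/

import Mathlib

/-- Key identity: `(m-t) * (C(m,t) * C(m-1-t, q-1-t)) = q * (C(m,q) * C(q-1,t))`. -/
lemma key_identity (q t m : ℕ) (ht : t < q) (hm : q ≤ m) :
    (m - t) * (m.choose t * (m - 1 - t).choose (q - 1 - t)) =
      q * (m.choose q * (q - 1).choose t) := by
  have htm : t < m := lt_of_lt_of_le ht hm
  -- (q-t) * C(m-t, q-t) = (m-t) * C(m-t-1, q-t-1)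
  have h1 : (q - t) * (m - t).choose (q - t) = (m - t) * (m - t - 1).choose (q - t - 1) := by
    obtain ⟨a, ha⟩ : ∃ a, m - t = a + 1 := ⟨m - t - 1, by omega⟩
    obtain ⟨b, hb⟩ : ∃ b, q - t = b + 1 := ⟨q - t - 1, by omega⟩
    rw [ha, hb]
    simp only [Nat.add_sub_cancel]
    rw [mul_comm (b + 1), Nat.add_one_mul_choose_eq a b]
  -- (q-t) * C(q,t) = q * C(q-1,t)
  have h2 : (q - t) * q.choose t = q * (q - 1).choose t := by
    obtain ⟨c, hc⟩ : ∃ c, q = c + 1 := ⟨q - 1, by omega⟩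
    subst hc
    rw [← Nat.choose_symm (le_of_lt ht), mul_comm]
    have : c + 1 - t = (c - t) + 1 := by omega
    rw [this, ← Nat.add_one_mul_choose_eq c (c - t)]
    simp only [Nat.add_sub_cancel, Nat.succ_eq_add_one]
    rw [Nat.choose_symm (by omega : t ≤ c)]
  -- C(m,q) * C(q,t) = C(m,t) * C(m-t, q-t)
  have h3 : m.choose q * q.choose t = m.choose t * (m - t).choose (q - t) :=
    Nat.choose_mul (le_of_lt ht)
  have e1 : m - 1 - t = m - t - 1 := by omega
  have e2 : q - 1 - t = q - t - 1 := by omega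
  rw [e1, e2]
  calc (m - t) * (m.choose t * ((m - t - 1).choose (q - t - 1)))
      = m.choose t * ((m - t) * (m - t - 1).choose (q - t - 1)) := by ring
    _ = m.choose t * ((q - t) * (m - t).choose (q - t)) := by rw [h1]
    _ = (q - t) * (m.choose t * (m - t).choose (q - t)) := by ring
    _ = (q - t) * (m.choose q * q.choose t) := by rw [h3]
    _ = m.choose q * ((q - t) * q.choose t) := by ring
    _ = m.choose q * (q * (q - 1).choose t) := by rw [h2]
    _ = q * (m.choose q * (q - 1).choose t) := by ring

/-- Let `p` be prime, `q = p ^ r`, `0 ≤ t < q`, and `m ≥ q` with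
`m ≢ t (mod q)`. Then `C(m,t) · C(m-1-t, q-1-t) ≡ 0 (mod p)`. -/
theorem stmt_3 (p r : ℕ) (hp : p.Prime) (q : ℕ) (hq : q = p ^ r)
    (t m : ℕ) (ht : t < q) (hm : q ≤ m) (hmt : ¬ m ≡ t [MOD q]) :
    p ∣ m.choose t * (m - 1 - t).choose (q - 1 - t) := by
  set X := m.choose t * (m - 1 - t).choose (q - 1 - t) with hX
  have hid := key_identity q t m ht hm
  have hndvd : ¬ q ∣ (m - t) := by
    intro h
    exact hmt ((Nat.modEq_iff_dvd' (le_of_lt (lt_of_lt_of_le ht hm))).mpr h).symm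
  by_contra hpX
  have hcop : Nat.Coprime q X := by
    rw [hq]
    exact Nat.Coprime.pow_left r ((Nat.Prime.coprime_iff_not_dvd hp).mpr hpX)
  have hdvd : q ∣ (m - t) * X := ⟨m.choose q * (q - 1).choose t, hid⟩
  exact hndvd (hcop.dvd_of_dvd_mul_right hdvd)
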